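/- Let X ⊆ ℝ^n be a closed set with reach(X) ≥ R > 0. Then X is R-convex: X equals the intersection over all open balls of radius R disjoint from X of the complements of those balls. Equivalently, for every x ∉ X there exists a center y with x in the open ball of radius R around y and that open ball disjoint from X. -/

import Mathlib

open Metric Filter Topology

open scoped RealInnerProductSpace

set_option maxHeartbeats 2000000 in
/-- If `X ⊆ ℝ^n` is closed with `reach(X) ≥ R > 0` (every point within distance `R` of
`X` has a unique nearest point in `X`), then `X` is `R`-convex: `X` is the intersection
of the complements of all open `R`-balls disjoint from `X`; equivalently, every point
outside `X` lies in an open `R`-ball disjoint from `X`. -/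
theorem stmt15 (n : ℕ) (R : ℝ) (hR : 0 < R) (X : Set (EuclideanSpace ℝ (Fin n)))
    (hXcl : IsClosed X)
    (hreach : ∀ y : EuclideanSpace ℝ (Fin n), infDist y X < R →
      ∃! x, x ∈ X ∧ dist y x = infDist y X) :
    X = ⋂₀ {S : Set (EuclideanSpace ℝ (Fin n)) |
        ∃ y, S = (ball y R)ᶜ ∧ ball y R ∩ X = ∅} ∧
    ∀ x ∉ X, ∃ y, x ∈ ball y R ∧ ball y R ∩ X = ∅ := by
  -- dispose of the empty case
  rcases Set.eq_empty_or_nonempty X with hXe | hXne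
  · obtain ⟨x₀, ⟨hx₀, -⟩, -⟩ := hreach 0 (by simp [hXe, Metric.infDist_empty, hR])
    exact absurd hx₀ (by simp [hXe])
  have key : ∀ x ∉ X, ∃ y, x ∈ ball y R ∧ ball y R ∩ X = ∅ := by
    intro x hx
    set d := infDist x X with hd
    clear_value d
    have hd0 : 0 < d := by rw [hd]; exact (hXcl.notMem_iff_infDist_pos hXne).mp hx
    by_cases hdR : R ≤ d
    · refine ⟨x, mem_ball_self hR, Set.eq_empty_iff_forall_notMem.mpr ?_⟩
      rintro z ⟨hzb, hzX⟩
      rw [mem_ball] at hzb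
      have : d ≤ dist x z := by rw [hd]; exact infDist_le_dist_of_mem hzX
      rw [dist_comm] at this
      linarith
    · push_neg at hdR
      obtain ⟨lam, hlam⟩ : ∃ lam : ℝ, lam = 1 - d / (2 * R) := ⟨_, rfl⟩
      have hlam0 : 0 < lam := by
        have h1 : d / (2 * R) < 1 := by
          rw [div_lt_one (by linarith)]; linarith
        rw [hlam]; linarith
      have hlam1 : lam < 1 := by
        have h1 : 0 < d / (2 * R) := div_pos hd0 (by linarith)
        rw [hlam]; linarith
      -- the feasible set
      set K : Set (EuclideanSpace ℝ (Fin n)) :=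
        {c | lam * dist c x + d ≤ infDist c X ∧ infDist c X ≤ R} with hK
      have hxK : x ∈ K := by
        constructor
        · simp [← hd]
        · simpa [← hd] using hdR.le
      have hKb : ∀ c ∈ K, dist c x ≤ (R - d) / lam := by
        rintro c ⟨h1, h2⟩
        rw [le_div_iff₀ hlam0, mul_comm]
        linarith
      have hKcl : IsClosed K := by
        apply IsClosed.inter
        · exact isClosed_le (by continuity) (continuous_infDist_pt X)
        · exact isClosed_le (continuous_infDist_pt X) continuous_const
      have hKcpt : IsCompact K := by
        apply isCompact_of_isClosed_isBounded hKcl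
        apply Bornology.IsBounded.subset (Metric.isBounded_closedBall
          (x := x) (r := (R - d) / lam))
        intro c hc
        simpa [Metric.mem_closedBall] using hKb c hc
      obtain ⟨c, hcK, hcmax⟩ := hKcpt.exists_isMaxOn ⟨x, hxK⟩
        ((continuous_infDist_pt X).continuousOn)
      set r : ℝ := infDist c X with hr
      clear_value r
      have hrd : d ≤ r := by
        have := hcK.1
        have h0 : 0 ≤ lam * dist c x := by positivity
        linarith [this]
      have hr0 : 0 < r := lt_of_lt_of_le hd0 hrd
      have hrR : r ≤ R := by rw [hr]; exact hcK.2
      have hdistcx : dist c x ≤ (R - d) / lam := hKb c hcK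
      have hdistcxR : dist c x < R := by
        have : (R - d) / lam < R := by
          rw [div_lt_iff₀ hlam0, hlam]
          have h2 : d / (2 * R) * R = d / 2 := by field_simp
          nlinarith [hd0, hR]
        linarith
      rcases eq_or_lt_of_le hrR with hrR' | hrR'
      · -- the ball of radius R around c works
        refine ⟨c, ?_, Set.eq_empty_iff_forall_notMem.mpr ?_⟩
        · rw [mem_ball, dist_comm]; exact hdistcxR
        · rintro z ⟨hzb, hzX⟩
          rw [mem_ball, dist_comm] at hzb
          have : r ≤ dist c z := by rw [hr]; exact infDist_le_dist_of_mem hzX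
          rw [← hrR'] at hzb
          linarith
      · -- impossible: we can push the ball further
        exfalso
        obtain ⟨p, ⟨hpX, hpd⟩, huniq⟩ := hreach c (by rw [← hr]; exact hrR')
        have hcp : dist c p = r := by rw [hpd, ← hr]
        set w : EuclideanSpace ℝ (Fin n) := r⁻¹ • (c - p) with hw
        have hcpn : ‖c - p‖ = r := by rw [← dist_eq_norm]; exact hcp
        have hwn : ‖w‖ = 1 := by
          rw [hw, norm_smul, hcpn, norm_inv, Real.norm_of_nonneg hr0.le,
            inv_mul_cancel₀ hr0.ne']
        have hrw : r • w = c - p := by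
          rw [hw, smul_smul, mul_inv_cancel₀ hr0.ne', one_smul]
        have hinnw : ⟪c - p, w⟫ = r := by
          rw [hw, real_inner_smul_right, real_inner_self_eq_norm_sq, hcpn, sq,
            inv_mul_cancel_left₀ hr0.ne']
        -- key subclaim: we can move distance up along w
        have sub : ∃ ε : ℝ, 0 < ε ∧ ε ≤ R - r ∧ r + lam * ε ≤ infDist (c + ε • w) X := by
          by_contra hcon
          push_neg at hcon
          set e : ℕ → ℝ := fun k => (R - r) / (k + 1) with he
          have he0 : ∀ k, 0 < e k := fun k => div_pos (by linarith) (by positivity)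
          have heR : ∀ k, e k ≤ R - r := fun k => by
            rw [he]
            apply div_le_self (by linarith)
            linarith [Nat.cast_nonneg (α := ℝ) k]
          set z : ℕ → EuclideanSpace ℝ (Fin n) := fun k => c + (e k) • w with hz
          have hzd : ∀ k, infDist (z k) X < r + lam * e k :=
            fun k => hcon (e k) (he0 k) (heR k)
          have hzR : ∀ k, infDist (z k) X < R := by
            intro k
            have := hzd k
            have h2 : lam * e k < e k := by
              nlinarith [he0 k]
            nlinarith [heR k]
          choose q hqX hqd using fun k => (hreach (z k) (hzR k)).exists
          have hczk : ∀ k, dist c (z k) = e k := by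
            intro k
            rw [dist_eq_norm]
            have : c - z k = (-(e k)) • w := by
              show c - (c + e k • w) = _; module
            rw [this, norm_smul, hwn]
            simp [abs_of_pos (he0 k)]
          have hlow : ∀ k, r ≤ dist c (q k) := fun k => by
            rw [hr]; exact infDist_le_dist_of_mem (hqX k)
          have hup : ∀ k, dist c (q k) ≤ r + 2 * e k := by
            intro k
            have h1 := dist_triangle c (z k) (q k)
            rw [hczk k, hqd k] at h1
            have h3 := hzd k
            have h4 : lam * e k ≤ e k := by nlinarith [he0 k]
            linarith
          -- inner product lower bound
          have hinn : ∀ k, (1 - lam) * r < ⟪q k - p, w⟫ := by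
            intro k
            have hne : dist (z k) (q k) < r + lam * e k := by rw [hqd k]; exact hzd k
            have hsq : ‖z k - q k‖ ^ 2 < (r + lam * e k) ^ 2 := by
              rw [← dist_eq_norm]
              have h0 : (0 : ℝ) ≤ dist (z k) (q k) := dist_nonneg
              nlinarith
            have hdecomp : z k - q k = (c - q k) + (e k) • w := by
              show (c + e k • w) - q k = _; module
            have hexp : ‖z k - q k‖ ^ 2
                = ‖c - q k‖ ^ 2 + 2 * (e k * ⟪c - q k, w⟫) + (e k) ^ 2 := by
              rw [hdecomp, norm_add_sq_real, real_inner_smul_right, norm_smul, hwn,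
                Real.norm_of_nonneg (he0 k).le]
              ring
            have hsplit : ⟪c - q k, w⟫ = r - ⟪q k - p, w⟫ := by
              have : c - q k = (c - p) - (q k - p) := by module
              rw [this, inner_sub_left, hinnw]
            have hnq : r ≤ ‖c - q k‖ := by rw [← dist_eq_norm]; exact hlow k
            have hnq2 : r ^ 2 ≤ ‖c - q k‖ ^ 2 := by nlinarith
            rw [hexp, hsplit] at hsq
            have hek := he0 k
            have h5 : 2 * (e k) * (r - ⟪q k - p, w⟫)
                < 2 * lam * r * (e k) + (lam ^ 2 - 1) * (e k) ^ 2 := by nlinarith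
            have h6a : lam * lam < 1 := by nlinarith [mul_lt_mul_of_pos_left hlam1 hlam0]
            have h6 : (lam ^ 2 - 1) * (e k) ^ 2 ≤ 0 :=
              mul_nonpos_of_nonpos_of_nonneg (by nlinarith) (sq_nonneg _)
            have h7 : 2 * (e k) * (r - ⟪q k - p, w⟫) < 2 * lam * r * (e k) := by linarith
            nlinarith [hek, h7]
          -- compactness: a subsequence of q converges
          have hqball : ∀ k, q k ∈ closedBall c (r + 2 * (R - r)) := by
            intro k
            rw [mem_closedBall, dist_comm]
            have := hup k
            have := heR k
            linarith
          obtain ⟨q', hq'ball, φ, hφ, hφlim⟩ :=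
            (isCompact_closedBall c (r + 2 * (R - r))).tendsto_subseq hqball
          have hq'X : q' ∈ X := hXcl.mem_of_tendsto hφlim
            (Eventually.of_forall fun k => hqX (φ k))
          have hdlim : Tendsto (fun k => dist c (q (φ k))) atTop (𝓝 (dist c q')) :=
            tendsto_const_nhds.dist hφlim
          -- upper bound sequence tends to r
          have hupseq : Tendsto (fun k : ℕ => r + 2 * e k) atTop (𝓝 r) := by
            have h1 : Tendsto (fun k : ℕ => (R - r) / (k + 1)) atTop (𝓝 0) := by
              apply Tendsto.div_atTop tendsto_const_nhds
              exact tendsto_atTop_add_const_right _ _ tendsto_natCast_atTop_atTop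
            have := (tendsto_const_nhds (x := r) (f := atTop (α := ℕ))).add
              (h1.const_mul 2)
            simpa [he, mul_comm] using this
          have hupφ : ∀ k, dist c (q (φ k)) ≤ r + 2 * e k := by
            intro k
            refine (hup (φ k)).trans ?_
            have : e (φ k) ≤ e k := by
              apply div_le_div_of_nonneg_left (by linarith) (by positivity)
              have h8 : (k : ℝ) ≤ (φ k : ℝ) := by
                exact_mod_cast Nat.cast_le.mpr (hφ.le_apply : k ≤ φ k)
              linarith
            linarith
          have hdq' : dist c q' = r := by
            have hle : dist c q' ≤ r :=
              le_of_tendsto_of_tendsto' hdlim hupseq hupφ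
            have hge : r ≤ dist c q' :=
              ge_of_tendsto' hdlim fun k => hlow (φ k)
            linarith
          have hq'p : q' = p := huniq q' ⟨hq'X, by rw [hdq', hr]⟩
          -- but q' is far from p
          have hfar : (1 - lam) * r ≤ dist q' p := by
            have hdlim2 : Tendsto (fun k => dist (q (φ k)) p) atTop (𝓝 (dist q' p)) :=
              hφlim.dist tendsto_const_nhds
            refine ge_of_tendsto' hdlim2 fun k => ?_
            have h1 := hinn (φ k)
            have h2 : ⟪q (φ k) - p, w⟫ ≤ ‖q (φ k) - p‖ * ‖w‖ := real_inner_le_norm _ _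
            rw [hwn, mul_one, ← dist_eq_norm] at h2
            linarith
          rw [hq'p, dist_self] at hfar
          nlinarith
        -- use the subclaim to contradict maximality
        obtain ⟨ε, hε0, hεR, hεd⟩ := sub
        set c' := c + ε • w with hc'
        have hcc' : dist c' c = ε := by
          rw [dist_eq_norm]
          have : c' - c = ε • w := by show (c + ε • w) - c = _; module
          rw [this, norm_smul, hwn]
          simp [abs_of_pos hε0]
        have hc'K : c' ∈ K := by
          constructor
          · have h1 : dist c' x ≤ ε + dist c x := by
              have := dist_triangle c' c x
              rw [hcc'] at this; exact this
            have h2 : lam * dist c' x + d ≤ lam * ε + (lam * dist c x + d) := by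
              nlinarith
            have h3 := hcK.1
            calc lam * dist c' x + d ≤ lam * ε + r := by linarith
              _ ≤ infDist c' X := by linarith [hεd]
          · have : c' - p = (r + ε) • w := by
              have : c' - p = (c - p) + ε • w := by show (c + ε • w) - p = _; module
              rw [this, ← hrw]; module
            have hd' : dist c' p = r + ε := by
              rw [dist_eq_norm, this, norm_smul, hwn]
              simp [abs_of_pos (by linarith : (0:ℝ) < r + ε)]
            have h5 := infDist_le_dist_of_mem hpX (x := c')
            rw [hd'] at h5
            linarith
        have hmax : infDist c' X ≤ r := by rw [hr]; exact hcmax hc'K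
        nlinarith
  refine ⟨?_, key⟩
  apply Set.Subset.antisymm
  · intro z hz S hS
    obtain ⟨y, rfl, hdisj⟩ := hS
    intro hzb
    have : z ∈ ball y R ∩ X := ⟨hzb, hz⟩
    rw [hdisj] at this
    exact this
  · intro z hz
    by_contra hzX
    obtain ⟨y, hzb, hdisj⟩ := key z hzX
    exact (hz ((ball y R)ᶜ) ⟨y, rfl, hdisj⟩) hzb
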